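/- Let (R, m, k) be an Artinian local ring with infinite residue field k, let M be an R-module, and let V be a k-vector subspace of the socle soc(R) = (0 :_R m). Assume that for every nonzero Δ ∈ soc(R) one has l(ΔM) ≥ dim_k V, where l denotes length. Then there exists an R-module homomorphism φ : R → M whose restriction to V is injective. In particular, if V = soc(R), then there exists an R-module homomorphism φ : R → M that is injective. -/

import Mathlib

open Filter IsLocalRing

universe u v

set_option maxRecDepth 8000

namespace SocleHelpers

open Module

lemma exists_injective_of_eval
    {k : Type*} [Field k] [Infinite k]
    {V W : Type*} [AddCommGroup V] [Module k V] [AddCommGroup W] [Module k W]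
    [FiniteDimensional k V]
    (A : Submodule k (V →ₗ[k] W))
    (h : ∀ v : V, v ≠ 0 → ∀ U : Submodule k W, FiniteDimensional k U →
      Module.finrank k U < Module.finrank k V → ∃ f ∈ A, f v ∉ U) :
    ∃ f ∈ A, Function.Injective f := by
  classical
  set n := Module.finrank k V with hn
  set S : Set ℕ := {r | ∃ f ∈ A, Module.finrank k (LinearMap.range f) = r} with hS
  have hSne : S.Nonempty := ⟨_, 0, A.zero_mem, rfl⟩
  have hSbdd : BddAbove S := ⟨n, by rintro r ⟨f, hf, rfl⟩; exact f.finrank_range_le⟩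
  obtain ⟨f, hfA, hfr⟩ := Nat.sSup_mem hSne hSbdd
  set r := sSup S with hrdef
  by_cases hinj : Function.Injective f
  · exact ⟨f, hfA, hinj⟩
  -- a nonzero kernel element
  have hker : LinearMap.ker f ≠ ⊥ := by
    rwa [Ne, LinearMap.ker_eq_bot]
  obtain ⟨δ, hδker, hδ0⟩ := (LinearMap.ker f).ne_bot_iff.mp hker
  have hrn : r < n := by
    have h1 := f.finrank_range_add_finrank_ker
    have h2 : 0 < finrank k (LinearMap.ker f) := by
      have : Nontrivial (LinearMap.ker f) :=
        Submodule.nontrivial_iff_ne_bot.mpr hker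
      exact finrank_pos
    omega
  obtain ⟨g, hgA, hgδ⟩ := h δ hδ0 (LinearMap.range f) inferInstance (by rw [hfr]; exact hrn)
  -- complement of the kernel
  obtain ⟨C, hC⟩ := Submodule.exists_isCompl (LinearMap.ker f)
  set m := finrank k C with hm
  have hmr : m = r := by
    have h1 := f.finrank_range_add_finrank_ker
    have h2 := Submodule.finrank_add_eq_of_isCompl hC
    rw [hfr] at h1
    omega
  let c : Basis (Fin m) k C := finBasis k C
  -- the distinguished independent family
  set w : Fin (m + 1) → W := Fin.cons (g δ) (fun i => f (c i : V)) with hw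
  have hcV : LinearIndependent k (fun i => (c i : V)) :=
    c.linearIndependent.map' C.subtype C.ker_subtype
  have hspanc : Submodule.span k (Set.range fun i => (c i : V)) = C := by
    have : (Set.range fun i => (c i : V)) = C.subtype '' Set.range c := by
      rw [← Set.range_comp]; rfl
    rw [this, ← Submodule.map_span, c.span_eq, Submodule.map_top, Submodule.range_subtype]
  have hfc : LinearIndependent k (fun i => f (c i : V)) := by
    have : Disjoint (Submodule.span k (Set.range fun i => (c i : V))) (LinearMap.ker f) := by
      rw [hspanc]; exact hC.symm.disjoint
    exact (hcV.map (f := f) this)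
  have hwi : LinearIndependent k w := by
    rw [hw, linearIndependent_fin_cons]
    refine ⟨hfc, fun hmem => hgδ ?_⟩
    have : Submodule.span k (Set.range fun i => f (c i : V)) ≤ LinearMap.range f := by
      rw [Submodule.span_le]
      rintro - ⟨i, rfl⟩
      exact ⟨(c i : V), rfl⟩
    exact this hmem
  -- the span of `w` and a projection onto it
  set L : Submodule k W := Submodule.span k (Set.range w) with hL
  let bL : Basis (Fin (m + 1)) k L := Basis.span hwi
  obtain ⟨Q, hQ⟩ := Submodule.exists_isCompl L
  set π : W →ₗ[k] L := L.linearProjOfIsCompl Q hQ with hπ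
  set vg : Fin (m + 1) → W := Fin.cons 0 (fun i => g (c i : V)) with hvg
  set B0 : Matrix (Fin (m + 1)) (Fin (m + 1)) k :=
    Matrix.of (fun i j => bL.repr (π (vg j)) i) with hB0
  have hπw : ∀ j, π (w j) = bL j := by
    intro j
    have h1 : w j ∈ L := Submodule.subset_span ⟨j, rfl⟩
    have h2 := Submodule.linearProjOfIsCompl_apply_left hQ ⟨w j, h1⟩
    have h3 : bL j = ⟨w j, h1⟩ := Basis.span_apply hwi j
    rw [h3]
    exact h2
  -- the polynomial
  set P : Matrix (Fin (m + 1)) (Fin (m + 1)) (Polynomial k) :=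
    Matrix.of (fun i j => Polynomial.C ((1 : Matrix (Fin (m + 1)) (Fin (m + 1)) k) i j)
      + Polynomial.X * Polynomial.C (B0 i j)) with hP
  set p : Polynomial k := P.det with hp
  have hPeval : ∀ t : k, p.eval t =
      Matrix.det (Matrix.of fun i j => (1 : Matrix (Fin (m + 1)) (Fin (m + 1)) k) i j + t * B0 i j) := by
    intro t
    have h1 := RingHom.map_det (Polynomial.evalRingHom t) P
    have h2 : P.map (Polynomial.evalRingHom t) =
        Matrix.of (fun i j => (1 : Matrix (Fin (m + 1)) (Fin (m + 1)) k) i j + t * B0 i j) := by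
      ext i j
      rw [Matrix.map_apply, hP]
      simp only [Matrix.of_apply, Polynomial.coe_evalRingHom, Polynomial.eval_add,
        Polynomial.eval_mul, Polynomial.eval_C, Polynomial.eval_X]
    rw [hp]
    calc Polynomial.eval t P.det = (Polynomial.evalRingHom t) P.det := rfl
    _ = (P.map (Polynomial.evalRingHom t)).det := h1
    _ = _ := by rw [h2]
  have hp0 : p.eval 0 = 1 := by
    rw [hPeval 0]
    have : (Matrix.of fun i j => (1 : Matrix (Fin (m + 1)) (Fin (m + 1)) k) i j + (0:k) * B0 i j)
        = (1 : Matrix (Fin (m + 1)) (Fin (m + 1)) k) := by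
      ext i j; simp
    rw [this, Matrix.det_one]
  have hpne : p ≠ 0 := by
    intro hcon
    rw [hcon] at hp0
    simp at hp0
  have hfin : ({(0 : k)} ∪ {x | p.IsRoot x}).Finite :=
    (Set.finite_singleton 0).union (Polynomial.finite_setOf_isRoot hpne)
  obtain ⟨t, ht⟩ := hfin.exists_notMem
  rw [Set.mem_union, Set.mem_singleton_iff] at ht
  push_neg at ht
  obtain ⟨ht0, htroot⟩ := ht
  have hpt : p.eval t ≠ 0 := htroot
  -- the perturbed family
  set u : Fin (m + 1) → W := fun j => w j + t • vg j with hu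
  set Qm : Matrix (Fin (m + 1)) (Fin (m + 1)) k :=
    Matrix.of (fun i j => (1 : Matrix (Fin (m + 1)) (Fin (m + 1)) k) i j + t * B0 i j) with hQm
  have hdet : Qm.det ≠ 0 := by rw [hQm, ← hPeval t]; exact hpt
  have hQminj : Function.Injective Qm.mulVec :=
    Matrix.mulVec_injective_iff_isUnit.mpr ((Matrix.isUnit_iff_isUnit_det _).mpr
      (isUnit_iff_ne_zero.mpr hdet))
  have hcoord : ∀ i j, bL.repr (π (u j)) i = Qm i j := by
    intro i j
    have h1 : π (u j) = bL j + t • π (vg j) := by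
      rw [hu]
      simp only [map_add, map_smul, hπw]
    rw [h1]
    simp only [map_add, map_smul, Basis.repr_self, Finsupp.add_apply, Finsupp.smul_apply,
      smul_eq_mul, hQm, Matrix.of_apply, hB0]
    rw [Matrix.one_apply, Finsupp.single_apply]
    by_cases hij : i = j
    · simp [hij]
    · simp [hij, Ne.symm hij]
  have hui : LinearIndependent k u := by
    rw [Fintype.linearIndependent_iff]
    intro a ha
    have h2 : bL.repr (π (∑ j, a j • u j)) = 0 := by rw [ha]; simp
    have h3 : Qm.mulVec a = 0 := by
      funext i
      have h4 := congrArg (fun F : Fin (m + 1) →₀ k => F i) h2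
      simp only [map_sum, map_smul, Finsupp.finset_sum_apply, Finsupp.smul_apply, smul_eq_mul,
        Finsupp.coe_zero, Pi.zero_apply] at h4
      rw [Matrix.mulVec, Pi.zero_apply]
      simp only [dotProduct]
      rw [← h4]
      refine Finset.sum_congr rfl fun j _ => ?_
      rw [hcoord i j, mul_comm]
    have : a = 0 := by
      apply hQminj
      rw [h3, Matrix.mulVec_zero]
    intro j; rw [this]; rfl
  have hfδ : f δ = 0 := LinearMap.mem_ker.mp hδker
  have husub : ∀ j, u j ∈ LinearMap.range (f + t • g) := by
    intro j
    refine Fin.cases ?_ ?_ j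
    · have h1 : u 0 = g δ := by
        rw [hu]; simp [hw, hvg]
      have h2 : (f + t • g) δ = t • g δ := by
        simp [LinearMap.add_apply, hfδ]
      have h3 : g δ = t⁻¹ • ((f + t • g) δ) := by
        rw [h2, smul_smul, inv_mul_cancel₀ ht0, one_smul]
      rw [h1, h3]
      exact Submodule.smul_mem _ _ ⟨δ, rfl⟩
    · intro i
      have h1 : u i.succ = (f + t • g) (c i : V) := by
        rw [hu]
        simp [hw, hvg, LinearMap.add_apply]
      rw [h1]
      exact ⟨_, rfl⟩
  have hspan : Submodule.span k (Set.range u) ≤ LinearMap.range (f + t • g) :=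
    Submodule.span_le.mpr (Set.range_subset_iff.mpr husub)
  have hcard : finrank k (Submodule.span k (Set.range u)) = m + 1 := by
    rw [finrank_span_eq_card hui, Fintype.card_fin]
  have hle : m + 1 ≤ finrank k (LinearMap.range (f + t • g)) := by
    rw [← hcard]
    exact Submodule.finrank_mono hspan
  have hmemA : f + t • g ∈ A := A.add_mem hfA (A.smul_mem t hgA)
  have hub : finrank k (LinearMap.range (f + t • g)) ≤ r := le_csSup hSbdd ⟨_, hmemA, rfl⟩
  omega

lemma ltseries_length_le_finrank {k X : Type*} [DivisionRing k] [AddCommGroup X] [Module k X]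
    [FiniteDimensional k X] (s : LTSeries (Submodule k X)) : s.length ≤ finrank k X := by
  have mono : ∀ i : ℕ, ∀ h : i < s.length + 1, i ≤ finrank k (s.toFun ⟨i, h⟩) := by
    intro i
    induction i with
    | zero => intro h; exact Nat.zero_le _
    | succ j ih =>
      intro h
      have hj : j < s.length + 1 := by omega
      have hjl : j < s.length := by omega
      have hstep : s.toFun ⟨j, hj⟩ < s.toFun ⟨j + 1, h⟩ := s.step ⟨j, hjl⟩
      have h1 := ih hj
      have h2 := Submodule.finrank_lt_finrank_of_lt hstep
      omega
  have h3 := mono s.length (by omega)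
  have h4 : s.toFun ⟨s.length, by omega⟩ ≤ ⊤ := le_top
  have h5 := (s.toFun ⟨s.length, by omega⟩).finrank_le
  omega

lemma krullDim_le_finrank (k X : Type*) [DivisionRing k] [AddCommGroup X] [Module k X]
    [FiniteDimensional k X] :
    Order.krullDim (Submodule k X) ≤ ((finrank k X : ℕ∞) : WithBot ℕ∞) := by
  rw [Order.krullDim_eq_iSup_length]
  exact WithBot.coe_le_coe.mpr (iSup_le fun p => by
    exact_mod_cast ltseries_length_le_finrank p)

end SocleHelpers


/-- The `e`-th Frobenius pushforward `F_*^e M` of an `R`-module `M`: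
the same underlying abelian group, with `R` acting through the `e`-th iterate
of the Frobenius endomorphism `r ↦ r ^ p`. -/
def FrobPush (p e : ℕ) (M : Type v) : Type v := M

/-- Regard an element of `M` as an element of `F_*^e M`. -/
def FrobPush.mk (p e : ℕ) {M : Type v} (m : M) : FrobPush p e M := m

instance FrobPush.instAddCommGroup {p e : ℕ} {M : Type v} [AddCommGroup M] :
    AddCommGroup (FrobPush p e M) := inferInstanceAs (AddCommGroup M)

instance FrobPush.instModule {R : Type u} [CommSemiring R] {p : ℕ} [ExpChar R p] {e : ℕ}
    {M : Type v} [AddCommGroup M] [Module R M] : Module R (FrobPush p e M) :=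
  Module.compHom M (iterateFrobenius R p e)

/-- `R` is `F`-finite: `R` is module-finite over itself via the Frobenius endomorphism. -/
def IsFFinite (R : Type u) [CommRing R] (p : ℕ) [ExpChar R p] : Prop :=
  RingHom.Finite (frobenius R p)

/-- `b_{p^e}(M)`: the largest `n` such that there is a surjective `R`-linear map
`F_*^e M ↠ M^n`. -/
noncomputable def frobSurjNumber (R : Type u) [CommRing R] (p : ℕ) [ExpChar R p] (e : ℕ)
    (M : Type v) [AddCommGroup M] [Module R M] : ℕ :=
  sSup {n : ℕ | ∃ f : FrobPush p e M →ₗ[R] (Fin n → M), Function.Surjective f}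

/-- The dual `F`-signature `s(M) = limsup_e b_{p^e}(M) / p^{e (d + α)}`, where `d` is the
Krull dimension of `R` and `α = log_p [k : k^p]`. -/
noncomputable def dualFSignature (R : Type u) [CommRing R] (p : ℕ) [ExpChar R p]
    (M : Type v) [AddCommGroup M] [Module R M] (d α : ℕ) : ℝ :=
  Filter.limsup (fun e : ℕ => (frobSurjNumber R p e M : ℝ) / (p : ℝ) ^ (e * (d + α)))
    Filter.atTop

/-- `[k : k^p]`, the degree of the residue field over its subfield of `p`-th powers,
i.e. the rank of `k` as a module over itself via the Frobenius. -/
noncomputable def residueFrobDegree (R : Type u) [CommRing R] [IsLocalRing R] (p : ℕ)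
    [ExpChar (ResidueField R) p] : ℕ :=
  @Module.finrank (ResidueField R) (ResidueField R) _ _
    (Module.compHom (ResidueField R) (frobenius (ResidueField R) p))

/-- A system of parameters of a local ring: `d = dim R` elements of the maximal ideal
generating an ideal whose radical is the maximal ideal. -/
def IsSOP (R : Type u) [CommRing R] [IsLocalRing R] (xs : List R) : Prop :=
  (∀ x ∈ xs, x ∈ maximalIdeal R) ∧ ringKrullDim R = xs.length ∧
    (Ideal.span {x | x ∈ xs}).radical = maximalIdeal R

/-- A local ring is Cohen-Macaulay if a system of parameters is a regular sequence. -/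
def IsCohenMacaulayLocalRing (R : Type u) [CommRing R] [IsLocalRing R] : Prop :=
  ∃ xs : List R, IsSOP R xs ∧ RingTheory.Sequence.IsRegular R xs

/-- A finitely generated module `M` over a local ring `R` is maximal Cohen-Macaulay if
some system of parameters of `R` is a regular sequence on `M` (i.e. `depth M = dim R`). -/
def IsMaximalCohenMacaulay (R : Type u) [CommRing R] [IsLocalRing R]
    (M : Type v) [AddCommGroup M] [Module R M] : Prop :=
  Module.Finite R M ∧ ∃ xs : List R, IsSOP R xs ∧ RingTheory.Sequence.IsRegular M xs

/-- A (Noetherian) local ring is regular if its maximal ideal can be generated by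
`dim R` elements. -/
def IsRegularLocalRing' (R : Type u) [CommRing R] [IsLocalRing R] : Prop :=
  ∃ s : Finset R, Ideal.span (s : Set R) = maximalIdeal R ∧ ringKrullDim R = s.card

/-- The length of a module, as the Krull dimension of its lattice of submodules. -/
noncomputable def moduleLength (R : Type u) [CommRing R]
    (M : Type v) [AddCommGroup M] [Module R M] : WithBot ℕ∞ :=
  Order.krullDim (Submodule R M)

/-- The length of a module as a natural number (junk value if infinite). -/
noncomputable def moduleLengthNat (R : Type u) [CommRing R]
    (M : Type v) [AddCommGroup M] [Module R M] : ℕ :=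
  ((moduleLength R M).unbotD 0).toNat

/-- The socle of a module over a local ring: the set of elements killed by the
maximal ideal. -/
def socle (R : Type u) [CommRing R] [IsLocalRing R]
    (M : Type v) [AddCommGroup M] [Module R M] : Submodule R M where
  carrier := {x | ∀ r ∈ maximalIdeal R, r • x = 0}
  add_mem' := by
    intro a b ha hb r hr
    rw [smul_add, ha r hr, hb r hr, add_zero]
  zero_mem' := fun r _ => smul_zero r
  smul_mem' := by
    intro c x hx r hr
    rw [smul_comm, hx r hr, smul_zero]

/-- A canonical module of a Cohen-Macaulay local ring: a finitely generated maximal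
Cohen-Macaulay module `ω` such that for every system of parameters `x̲`, the quotient
`ω/x̲ω` has the same length as `R/(x̲)` and a one-dimensional socle; equivalently,
`ω/x̲ω` is the injective hull of the residue field over the Artinian ring `R/(x̲)`. -/
def IsCanonicalModule (R : Type u) [CommRing R] [IsLocalRing R]
    (ω : Type v) [AddCommGroup ω] [Module R ω] : Prop :=
  Module.Finite R ω ∧ IsMaximalCohenMacaulay R ω ∧
    ∀ xs : List R, IsSOP R xs →
      moduleLength R (ω ⧸ (Ideal.span {x | x ∈ xs} • (⊤ : Submodule R ω))) =
        moduleLength R (R ⧸ Ideal.span {x | x ∈ xs}) ∧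
      moduleLength R (socle R (ω ⧸ (Ideal.span {x | x ∈ xs} • (⊤ : Submodule R ω)))) = 1

/-- The Frobenius power `I^{[q]}` of an ideal: the ideal generated by `q`-th powers of
elements of `I`. -/
def frobeniusPower {R : Type u} [CommRing R] (I : Ideal R) (q : ℕ) : Ideal R :=
  Ideal.span ((fun x => x ^ q) '' (I : Set R))

/-- The Hilbert-Kunz multiplicity `e_HK(I, M) = lim_e l(M/I^{[p^e]}M)/p^{ed}`,
where `d = dim R` (the limit exists by Monsky's theorem, so we take a `limsup`). -/
noncomputable def hilbertKunzMult (R : Type u) [CommRing R] (p d : ℕ) (I : Ideal R)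
    (M : Type v) [AddCommGroup M] [Module R M] : ℝ :=
  Filter.limsup
    (fun e : ℕ =>
      (moduleLengthNat R (M ⧸ (frobeniusPower I (p ^ e) • (⊤ : Submodule R M))) : ℝ) /
        (p : ℝ) ^ (e * d))
    Filter.atTop

/-- `x` lies in the tight closure `I^*` of `I`: there is `c` outside every minimal prime
with `c x^{p^e} ∈ I^{[p^e]}` for all `e ≫ 0`. -/
def MemTightClosure (R : Type u) [CommRing R] (p : ℕ) (I : Ideal R) (x : R) : Prop :=
  ∃ c : R, (∀ P ∈ minimalPrimes R, c ∉ P) ∧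
    ∃ e₀ : ℕ, ∀ e ≥ e₀, c * x ^ p ^ e ∈ frobeniusPower I (p ^ e)

/-- A local ring is `F`-rational if every ideal generated by a system of parameters is
tightly closed. -/
def IsFRational (R : Type u) [CommRing R] [IsLocalRing R] (p : ℕ) : Prop :=
  ∀ xs : List R, IsSOP R xs → ∀ x : R,
    MemTightClosure R p (Ideal.span {y | y ∈ xs}) x → x ∈ Ideal.span {y | y ∈ xs}

/-- `R` is strongly `F`-regular: for every `c` outside every minimal prime there is `e`
such that the map `R → F_*^e R`, `1 ↦ F_*^e c`, splits as a map of `R`-modules;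
equivalently there is an `R`-linear map `ψ : F_*^e R → R` with `ψ(c) = 1`. -/
def IsStronglyFRegular (R : Type u) [CommRing R] (p : ℕ) [ExpChar R p] : Prop :=
  ∀ c : R, (∀ P ∈ minimalPrimes R, c ∉ P) →
    ∃ (e : ℕ) (ψ : FrobPush p e R →ₗ[R] R), ψ (FrobPush.mk p e c) = 1


open Module in
lemma key_exists
    (R : Type u) [CommRing R] [IsLocalRing R] [IsArtinianRing R]
    [Infinite (ResidueField R)]
    (M : Type v) [AddCommGroup M] [Module R M]
    (V : Ideal R) (hV : V ≤ socle R R)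
    (hlen : ∀ Δ ∈ socle R R, Δ ≠ 0 →
      moduleLength R V ≤ moduleLength R (LinearMap.range (Δ • (LinearMap.id : M →ₗ[R] M)))) :
    ∃ x : M, ∀ v ∈ V, v • x = 0 → v = 0 := by
  classical
  have hVtor : Module.IsTorsionBySet R V (maximalIdeal R : Set R) := by
    rintro ⟨v, hv⟩ ⟨r, hr⟩
    exact Subtype.ext (hV hv r hr)
  letI : Module (ResidueField R) V := hVtor.module
  haveI : IsScalarTower R (ResidueField R) V := hVtor.isScalarTower
  have hStor : Module.IsTorsionBySet R (socle R M) (maximalIdeal R : Set R) := by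
    rintro ⟨s, hs⟩ ⟨r, hr⟩
    exact Subtype.ext (hs r hr)
  letI : Module (ResidueField R) (socle R M) := hStor.module
  haveI : IsScalarTower R (ResidueField R) (socle R M) := hStor.isScalarTower
  haveI : IsArtinian (ResidueField R) V := isArtinian_of_tower R inferInstance
  haveI hfd : FiniteDimensional (ResidueField R) V := by
    have hli : LinearIndependent (ResidueField R)
        ((↑) : (Basis.ofVectorSpaceIndex (ResidueField R) V) → V) := by
      rw [← Basis.coe_ofVectorSpace]
      exact (Basis.ofVectorSpace _ _).linearIndependent
    have hfin := IsArtinian.finite_of_linearIndependent hli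
    haveI := hfin.fintype
    exact Module.Finite.of_basis (Basis.ofVectorSpace (ResidueField R) V)
  have hmemS : ∀ (v : R), v ∈ socle R R → ∀ x : M, v • x ∈ socle R M := by
    intro v hv x r hr
    have h0 : r * v = 0 := hv r hr
    rw [smul_smul, h0, zero_smul]
  have hmk : ∀ (r : R) (v : V),
      (IsLocalRing.residue R r • v : V) = r • v :=
    fun r v => hVtor.mk_smul r v
  have hmkS : ∀ (r : R) (z : socle R M),
      (IsLocalRing.residue R r • z : socle R M) = r • z :=
    fun r z => hStor.mk_smul r z
  let Ψ : M → (V →ₗ[ResidueField R] socle R M) := fun x =>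
    { toFun := fun v => ⟨v.1 • x, hmemS v.1 (hV v.2) x⟩
      map_add' := by
        intro v w
        apply Subtype.ext
        show ((v + w : V) : R) • x = ((v : R) • x) + ((w : R) • x)
        rw [Submodule.coe_add, add_smul]
      map_smul' := by
        intro c v
        obtain ⟨r, rfl⟩ := IsLocalRing.residue_surjective c
        simp only [RingHom.id_apply]
        rw [hmk r v, hmkS r]
        apply Subtype.ext
        show ((r • v : V) : R) • x = r • ((v : R) • x)
        rw [Submodule.coe_smul, smul_eq_mul, mul_smul] }
  have hΨval : ∀ (x : M) (v : V), ((Ψ x v : socle R M) : M) = (v : R) • x := fun x v => rfl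
  let A : Submodule (ResidueField R) (V →ₗ[ResidueField R] socle R M) :=
    { carrier := Set.range Ψ
      add_mem' := by
        rintro f g ⟨x, rfl⟩ ⟨y, rfl⟩
        refine ⟨x + y, ?_⟩
        apply LinearMap.ext
        intro v
        apply Subtype.ext
        show (v : R) • (x + y) = ((v : R) • x) + ((v : R) • y)
        rw [smul_add]
      zero_mem' := by
        refine ⟨0, ?_⟩
        apply LinearMap.ext
        intro v
        apply Subtype.ext
        show (v : R) • (0 : M) = (0 : M)
        rw [smul_zero]
      smul_mem' := by
        intro c f hf
        obtain ⟨x, rfl⟩ := hf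
        obtain ⟨r, rfl⟩ := IsLocalRing.residue_surjective c
        refine ⟨r • x, ?_⟩
        apply LinearMap.ext
        intro v
        rw [LinearMap.smul_apply, hmkS r]
        apply Subtype.ext
        show (v : R) • (r • x) = r • ((v : R) • x)
        rw [smul_comm] }
  have habs : ∀ v : V, v ≠ 0 → ∀ U : Submodule (ResidueField R) (socle R M),
      FiniteDimensional (ResidueField R) U →
      finrank (ResidueField R) U < finrank (ResidueField R) V → ∃ f ∈ A, f v ∉ U := by
    intro v hv U hU hUlt
    by_contra hcon
    push_neg at hcon
    set Δ : R := (v : R) with hΔ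
    have hΔm : Δ ∈ socle R R := hV v.2
    have hΔ0 : Δ ≠ 0 := fun h => hv (Subtype.ext h)
    set T : Submodule R M := LinearMap.range (Δ • (LinearMap.id : M →ₗ[R] M)) with hT
    have h1 : moduleLength R V ≤ moduleLength R T := hlen Δ hΔm hΔ0
    -- lower bound: finrank V ≤ moduleLength V
    have hRS : StrictMono (fun p : Submodule (ResidueField R) V => p.restrictScalars R) := by
      intro p q hpq
      rw [SetLike.lt_iff_le_and_exists] at hpq ⊢
      obtain ⟨hle, z, hzq, hzp⟩ := hpq
      exact ⟨fun y hy => hle hy, z, hzq, hzp⟩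
    have h2 : ((finrank (ResidueField R) V : ℕ∞) : WithBot ℕ∞) ≤ moduleLength R V := by
      let b := finBasis (ResidueField R) V
      let s0 : LTSeries (Submodule (ResidueField R) V) :=
        ⟨finrank (ResidueField R) V, b.flag, fun i => b.flag_strictMono (Fin.castSucc_lt_succ (i := i))⟩
      let s1 : LTSeries (Submodule R V) := s0.map _ hRS
      have h := Order.LTSeries.length_le_krullDim s1
      have hlen1 : s1.length = finrank (ResidueField R) V := rfl
      rw [hlen1] at h
      exact h
    -- upper bound
    have hTS : ∀ y : M, y ∈ T → y ∈ socle R M := by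
      rintro y ⟨x, rfl⟩
      show ((Δ • (LinearMap.id : M →ₗ[R] M)) x) ∈ socle R M
      rw [LinearMap.smul_apply, LinearMap.id_coe, id_eq]
      exact hmemS Δ hΔm x
    have hTU : ∀ (y : M) (hy : y ∈ T), (⟨y, hTS y hy⟩ : socle R M) ∈ U := by
      rintro y hy
      obtain ⟨x, hx⟩ := hy
      have hyx : y = Δ • x := by
        rw [← hx, LinearMap.smul_apply, LinearMap.id_coe, id_eq]
      have h4 := hcon (Ψ x) ⟨x, rfl⟩
      have h5 : (⟨y, hTS y ⟨x, hx⟩⟩ : socle R M) = Ψ x v := by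
        apply Subtype.ext
        rw [hΨval]
        exact hyx
      rw [h5]
      exact h4
    let e : T → U := fun y => ⟨⟨y.1, hTS y.1 y.2⟩, hTU y.1 y.2⟩
    have einj : Function.Injective e := by
      intro a b hab
      apply Subtype.ext
      exact congrArg (fun z : U => ((z : socle R M) : M)) hab
    have he0 : e 0 = 0 := rfl
    have headd : ∀ a b : T, e (a + b) = e a + e b := fun a b => rfl
    let F : Submodule R T → Submodule (ResidueField R) U := fun p =>
      { carrier := e '' p
        add_mem' := by
          rintro _ _ ⟨a, ha, rfl⟩ ⟨b, hb, rfl⟩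
          exact ⟨a + b, p.add_mem ha hb, headd a b⟩
        zero_mem' := ⟨0, p.zero_mem, he0⟩
        smul_mem' := by
          intro c z hz
          obtain ⟨a, ha, rfl⟩ := hz
          obtain ⟨r, rfl⟩ := IsLocalRing.residue_surjective c
          refine ⟨r • a, p.smul_mem r ha, ?_⟩
          apply Subtype.ext
          apply Subtype.ext
          show ((r • a : T) : M)
            = (((IsLocalRing.residue R r • (e a) : U) : socle R M) : M)
          have hcs : (IsLocalRing.residue R r • (e a) : U).1
              = IsLocalRing.residue R r • (e a).1 := rfl
          rw [hcs, hmkS]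
          rfl }
    have hFs : StrictMono F := by
      intro p q hpq
      rw [SetLike.lt_iff_le_and_exists] at hpq ⊢
      obtain ⟨hle, z, hzq, hzp⟩ := hpq
      constructor
      · rintro _ ⟨a, ha, rfl⟩
        exact ⟨a, hle ha, rfl⟩
      · refine ⟨e z, ⟨z, hzq, rfl⟩, ?_⟩
        rintro ⟨a, ha, hea⟩
        exact hzp (einj hea ▸ ha)
    have h3 : moduleLength R T ≤ ((finrank (ResidueField R) U : ℕ∞) : WithBot ℕ∞) :=
      (Order.krullDim_le_of_strictMono F hFs).trans (SocleHelpers.krullDim_le_finrank _ _)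
    have hchain := (h2.trans h1).trans h3
    have hfr : finrank (ResidueField R) V ≤ finrank (ResidueField R) U := by
      exact_mod_cast hchain
    omega
  obtain ⟨f, hfA, hfinj⟩ := SocleHelpers.exists_injective_of_eval A habs
  obtain ⟨x, rfl⟩ := hfA
  refine ⟨x, fun v hv h0 => ?_⟩
  have hz : Ψ x ⟨v, hv⟩ = 0 := Subtype.ext h0
  have := hfinj (a₁ := ⟨v, hv⟩) (a₂ := 0) (by rw [hz, map_zero])
  exact congrArg Subtype.val this

/-- Let `(R, m, k)` be an Artinian local ring with infinite residue
field, `M` an `R`-module, and `V ⊆ soc(R)` a `k`-subspace of the socle. If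
`l(ΔM) ≥ dim_k V` for every nonzero `Δ ∈ soc(R)`, then there is an `R`-module map
`φ : R → M` whose restriction to `V` is injective. In particular, if `V = soc(R)`,
there is an injective `R`-module map `φ : R → M`. -/
theorem exists_hom_injective_on_socle
    (R : Type u) [CommRing R] [IsLocalRing R] [IsArtinianRing R]
    [Infinite (ResidueField R)]
    (M : Type v) [AddCommGroup M] [Module R M]
    (V : Ideal R) (hV : V ≤ socle R R)
    (hlen : ∀ Δ ∈ socle R R, Δ ≠ 0 →
      moduleLength R V ≤ moduleLength R (LinearMap.range (Δ • (LinearMap.id : M →ₗ[R] M)))) :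
    (∃ φ : R →ₗ[R] M, ∀ x ∈ V, φ x = 0 → x = 0) ∧
    (V = socle R R → ∃ φ : R →ₗ[R] M, Function.Injective φ) := by
  classical
  obtain ⟨x, hx⟩ := key_exists R M V hV hlen
  constructor
  · refine ⟨LinearMap.toSpanSingleton R M x, fun v hv h0 => ?_⟩
    exact hx v hv (by rwa [LinearMap.toSpanSingleton_apply] at h0)
  · intro hVs
    subst hVs
    refine ⟨LinearMap.toSpanSingleton R M x, ?_⟩
    have hinj0 : ∀ r : R, r • x = 0 → r = 0 := by
      intro r hr
      by_contra hr0
      obtain ⟨N, hN⟩ : IsNilpotent (maximalIdeal R) := by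
        have h1 := IsArtinianRing.isNilpotent_jacobson_bot (R := R)
        have hbt : (⊥ : Ideal R) ≠ ⊤ := by
          rw [Ne, Ideal.eq_top_iff_one, Submodule.mem_bot]
          exact one_ne_zero
        rwa [IsLocalRing.jacobson_eq_maximalIdeal ⊥ hbt] at h1
      have hex : ∃ j : ℕ, ∀ s ∈ (maximalIdeal R) ^ j, s * r = 0 := by
        refine ⟨N, fun s hs => ?_⟩
        rw [hN] at hs
        have : s = 0 := by simpa using hs
        rw [this, zero_mul]
      have hn := Nat.find_spec hex
      have hn0 : Nat.find hex ≠ 0 := by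
        intro h0
        apply hr0
        have h1 := Nat.find_spec hex
        rw [h0] at h1
        have h2 := h1 1 (by rw [pow_zero, Ideal.one_eq_top]; exact Submodule.mem_top)
        rwa [one_mul] at h2
      have hlt : ¬ ∀ s ∈ (maximalIdeal R) ^ (Nat.find hex - 1), s * r = 0 :=
        Nat.find_min hex (by omega)
      push_neg at hlt
      obtain ⟨s, hs, hsr⟩ := hlt
      have hsoc : s * r ∈ socle R R := by
        intro a ha
        have h1 : s * a ∈ (maximalIdeal R) ^ (Nat.find hex) := by
          have h2 := Ideal.mul_mem_mul hs ha
          rwa [← pow_succ, Nat.sub_add_cancel (by omega)] at h2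
        have h2 := hn (s * a) h1
        show a • (s * r) = 0
        rw [smul_eq_mul]
        calc a * (s * r) = (s * a) * r := by ring
        _ = 0 := h2
      apply hsr
      apply hx _ hsoc
      rw [mul_smul, hr, smul_zero]
    intro a b hab
    have h1 : (a - b) • x = 0 := by
      rw [sub_smul, sub_eq_zero]
      exact hab
    have h2 := hinj0 _ h1
    exact sub_eq_zero.mp h2
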